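/- Monotone decrease of the expected neighbor feature for positive node features and negative τ (key step of Theorem 4.1): for every fixed a > 0, the function τ ↦ F(a, τ) is strictly increasing on (−∞, 0), i.e., F(a, τ) decreases as τ decreases from 0 toward −∞; equivalently, its partial derivative in τ is positive for all τ < 0 and a > 0. -/

import Mathlib

open MeasureTheory

/-- The standard Gaussian density `φ(x) = (1/√(2π)) e^{-x²/2}`. -/
noncomputable def phi (x : ℝ) : ℝ :=
  (Real.sqrt (2 * Real.pi))⁻¹ * Real.exp (-x ^ 2 / 2)

/-- The Gauss error function `erf(z) = (2/√π) ∫₀^z e^{-t²} dt`. -/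
noncomputable def erf (z : ℝ) : ℝ :=
  (2 / Real.sqrt Real.pi) * ∫ t in (0 : ℝ)..z, Real.exp (-t ^ 2)

/-- The complementary error function `erfc(z) = 1 - erf(z)`. -/
noncomputable def erfc (z : ℝ) : ℝ := 1 - erf z

lemma gauss_cont : Continuous fun t : ℝ => Real.exp (-t ^ 2) := by
  continuity

lemma gauss_integrable : Integrable (fun t : ℝ => Real.exp (-t ^ 2)) := by
  have h := integrable_exp_neg_mul_sq (b := (1:ℝ)) one_pos
  simpa using h

lemma hasDerivAt_erf (z : ℝ) :
    HasDerivAt erf (2 / Real.sqrt Real.pi * Real.exp (-z ^ 2)) z := by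
  have h : HasDerivAt (fun x : ℝ => ∫ t in (0:ℝ)..x, Real.exp (-t ^ 2))
      (Real.exp (-z ^ 2)) z :=
    intervalIntegral.integral_hasDerivAt_right
      (gauss_integrable.intervalIntegrable)
      (gauss_cont.stronglyMeasurableAtFilter _ _)
      gauss_cont.continuousAt
  have := h.const_mul (2 / Real.sqrt Real.pi)
  exact this

/-- The derivative factor `k(τ) = (2/√π) e^{-((τ-a)/√2)²} / √2`. -/
noncomputable def kk (a τ : ℝ) : ℝ :=
  2 / Real.sqrt Real.pi * Real.exp (-((τ - a) / Real.sqrt 2) ^ 2) / Real.sqrt 2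

lemma kk_pos (a τ : ℝ) : 0 < kk a τ := by
  unfold kk
  positivity

lemma hasDerivAt_erfc_comp (b τ : ℝ) :
    HasDerivAt (fun τ : ℝ => erfc ((τ + b) / Real.sqrt 2))
      (-(2 / Real.sqrt Real.pi * Real.exp (-((τ + b) / Real.sqrt 2) ^ 2) / Real.sqrt 2)) τ := by
  have hinner : HasDerivAt (fun τ : ℝ => (τ + b) / Real.sqrt 2) (1 / Real.sqrt 2) τ :=
    ((hasDerivAt_id τ).add_const b).div_const _
  have h := (hasDerivAt_erf ((τ + b) / Real.sqrt 2)).comp τ hinner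
  have h2 := h.const_sub 1
  simp only [Function.comp] at h2
  simp only [erfc]
  refine h2.congr_deriv ?_
  ring

lemma hasDerivAt_P (a τ : ℝ) :
    HasDerivAt (fun τ : ℝ => erfc ((τ - a) / Real.sqrt 2)) (-(kk a τ)) τ := by
  have h := hasDerivAt_erfc_comp (-a) τ
  simp only [← sub_eq_add_neg] at h
  exact h

lemma exp_shift (a τ : ℝ) :
    Real.exp (2 * τ * a) * Real.exp (-((τ + a) / Real.sqrt 2) ^ 2)
      = Real.exp (-((τ - a) / Real.sqrt 2) ^ 2) := by
  rw [← Real.exp_add]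
  congr 1
  have h2 : Real.sqrt 2 ^ 2 = 2 := Real.sq_sqrt (by norm_num)
  rw [div_pow, div_pow, h2]
  ring

lemma hasDerivAt_Q (a τ : ℝ) :
    HasDerivAt (fun τ : ℝ => Real.exp (2 * τ * a) * erfc ((τ + a) / Real.sqrt 2))
      (2 * a * (Real.exp (2 * τ * a) * erfc ((τ + a) / Real.sqrt 2)) - kk a τ) τ := by
  have hlin : HasDerivAt (fun τ : ℝ => 2 * τ * a) (2 * a) τ := by
    simpa using ((hasDerivAt_id τ).const_mul 2).mul_const a
  have q1 : HasDerivAt (fun τ : ℝ => Real.exp (2 * τ * a))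
      (Real.exp (2 * τ * a) * (2 * a)) τ := (Real.hasDerivAt_exp _).comp τ hlin
  have q2 := hasDerivAt_erfc_comp a τ
  have h := q1.mul q2
  refine h.congr_deriv ?_
  rw [kk, ← exp_shift a τ]
  ring

lemma strictMono_erf : StrictMono erf := by
  apply strictMono_of_deriv_pos
  intro x
  rw [(hasDerivAt_erf x).deriv]
  positivity

lemma integral_Ioi_gauss_pos (z : ℝ) : 0 < ∫ t in Set.Ioi z, Real.exp (-t ^ 2) := by
  rw [setIntegral_pos_iff_support_of_nonneg_ae]
  · have : (Function.support fun t : ℝ => Real.exp (-t ^ 2)) = Set.univ := by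
      ext t; simp [Function.support, Real.exp_ne_zero]
    rw [this, Set.univ_inter]
    simp [Real.volume_Ioi]
  · filter_upwards with t using (Real.exp_pos _).le
  · exact gauss_integrable.integrableOn

lemma erfc_eq_integral (z : ℝ) :
    erfc z = (2 / Real.sqrt Real.pi) * ∫ t in Set.Ioi z, Real.exp (-t ^ 2) := by
  have htot : ∫ t : ℝ, Real.exp (-t ^ 2) = Real.sqrt Real.pi := by
    have := integral_gaussian (1 : ℝ)
    simpa using this
  have hIoi0 : ∫ t in Set.Ioi (0:ℝ), Real.exp (-t ^ 2) = Real.sqrt Real.pi / 2 := by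
    have := integral_gaussian_Ioi (1 : ℝ)
    simpa using this
  have hsplit : ∀ w : ℝ, (∫ t in Set.Iic w, Real.exp (-t ^ 2))
      = Real.sqrt Real.pi - ∫ t in Set.Ioi w, Real.exp (-t ^ 2) := by
    intro w
    have h := integral_add_compl (measurableSet_Ioi (a := w)) gauss_integrable
    rw [Set.compl_Ioi] at h
    linarith [h.trans htot]
  have hint : ∫ t in (0:ℝ)..z, Real.exp (-t ^ 2)
      = (∫ t in Set.Iic z, Real.exp (-t ^ 2)) - ∫ t in Set.Iic (0:ℝ), Real.exp (-t ^ 2) := by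
    rw [← intervalIntegral.integral_Iic_sub_Iic gauss_integrable.integrableOn
      gauss_integrable.integrableOn]
  have hpi : Real.sqrt Real.pi ≠ 0 := by positivity
  rw [erfc, erf, hint, hsplit, hsplit, hIoi0]
  field_simp
  ring

lemma erfc_pos (z : ℝ) : 0 < erfc z := by
  rw [erfc_eq_integral]
  have := integral_Ioi_gauss_pos z
  positivity

lemma erf_zero : erf 0 = 0 := by simp [erf]

lemma one_lt_erfc {z : ℝ} (hz : z < 0) : 1 < erfc z := by
  have := strictMono_erf hz
  rw [erf_zero] at this
  simp only [erfc]
  linarith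

lemma strictAnti_erfc : StrictAnti erfc := by
  intro x y hxy
  have := strictMono_erf hxy
  simp only [erfc]
  linarith

lemma Q_lt_P (a : ℝ) (ha : 0 < a) {τ : ℝ} (hτ : τ ≤ 0) :
    Real.exp (2 * τ * a) * erfc ((τ + a) / Real.sqrt 2) < erfc ((τ - a) / Real.sqrt 2) := by
  set H : ℝ → ℝ := fun τ =>
    erfc ((τ - a) / Real.sqrt 2) - Real.exp (2 * τ * a) * erfc ((τ + a) / Real.sqrt 2) with hH
  have hderiv : ∀ x : ℝ, HasDerivAt H
      (-(kk a x) - (2 * a * (Real.exp (2 * x * a) * erfc ((x + a) / Real.sqrt 2)) - kk a x))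
      x := fun x => (hasDerivAt_P a x).sub (hasDerivAt_Q a x)
  have hH0 : 0 < H 0 := by
    have hs2 : (0:ℝ) < Real.sqrt 2 := Real.sqrt_pos.2 (by norm_num)
    have hlt : (0 - a) / Real.sqrt 2 < (0 + a) / Real.sqrt 2 := by
      gcongr <;> linarith
    have hlt2 := strictAnti_erfc hlt
    show 0 < erfc ((0 - a) / Real.sqrt 2)
        - Real.exp (2 * 0 * a) * erfc ((0 + a) / Real.sqrt 2)
    have e0 : Real.exp (2 * 0 * a) = 1 := by norm_num
    rw [e0]
    linarith
  have anti : AntitoneOn H (Set.Iic 0) := by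
    apply antitoneOn_of_deriv_nonpos (convex_Iic 0)
    · exact fun x _ => (hderiv x).differentiableAt.continuousAt.continuousWithinAt
    · exact fun x _ => (hderiv x).differentiableAt.differentiableWithinAt
    · intro x _
      rw [(hderiv x).deriv]
      have h1 := erfc_pos ((x + a) / Real.sqrt 2)
      have h2 := Real.exp_pos (2 * x * a)
      nlinarith [mul_pos ha (mul_pos h2 h1)]
  have hle : H 0 ≤ H τ := anti (Set.mem_Iic.2 hτ) (Set.mem_Iic.2 le_rfl) hτ
  have : 0 < H τ := lt_of_lt_of_le hH0 hle
  simp only [hH] at this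
  linarith

lemma k_small (a : ℝ) (ha : 0 < a) {τ : ℝ} (hτ : τ < 0) : 2 * (-τ) * kk a τ < 1 := by
  have hpi : (0:ℝ) < Real.sqrt Real.pi := Real.sqrt_pos.2 Real.pi_pos
  have hs2 : (0:ℝ) < Real.sqrt 2 := Real.sqrt_pos.2 (by norm_num)
  have h2 : Real.sqrt 2 ^ 2 = 2 := Real.sq_sqrt (by norm_num)
  have hp2 : Real.sqrt Real.pi ^ 2 = Real.pi := Real.sq_sqrt Real.pi_pos.le
  have e1 : ((τ - a) / Real.sqrt 2) ^ 2 = (τ - a) ^ 2 / 2 := by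
    rw [div_pow, h2]
  have mono : Real.exp (-((τ - a) ^ 2 / 2)) ≤ Real.exp (-(τ ^ 2 / 2)) := by
    apply Real.exp_le_exp.2
    nlinarith
  have key : (-τ) * Real.exp (-(τ ^ 2 / 2)) ≤ Real.exp (-(1/2 : ℝ)) := by
    have h1 : (-τ) ≤ Real.exp ((τ ^ 2 - 1) / 2) := by
      have := Real.add_one_le_exp ((τ ^ 2 - 1) / 2)
      nlinarith [sq_nonneg (τ + 1)]
    have h2' := mul_le_mul_of_nonneg_right h1 (Real.exp_pos (-(τ ^ 2 / 2))).le
    rwa [← Real.exp_add, show (τ ^ 2 - 1) / 2 + -(τ ^ 2 / 2) = -(1/2 : ℝ) by ring] at h2'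
  set c : ℝ := 4 / (Real.sqrt Real.pi * Real.sqrt 2) with hc
  have hcpos : 0 < c := by positivity
  have hnum : c * Real.exp (-(1/2 : ℝ)) < 1 := by
    have h8 : (8:ℝ) < Real.pi * Real.exp 1 := by
      nlinarith [Real.pi_gt_d6, Real.exp_one_gt_d9]
    have hsq : (c * Real.exp (-(1/2 : ℝ))) ^ 2 * (Real.pi * Real.exp 1) = 8 := by
      have hee : Real.exp (-(1/2 : ℝ)) ^ 2 * Real.exp 1 = 1 := by
        rw [sq, ← Real.exp_add, ← Real.exp_add]
        norm_num
      have hpe : Real.pi ≠ 0 := Real.pi_ne_zero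
      rw [mul_pow, hc, div_pow, mul_pow, h2, hp2]
      field_simp
      nlinarith [hee, Real.pi_pos]
    nlinarith [hsq, h8, mul_pos Real.pi_pos (Real.exp_pos 1),
      sq_nonneg (c * Real.exp (-(1/2 : ℝ)) - 1),
      mul_pos hcpos (Real.exp_pos (-(1/2 : ℝ)))]
  have hτn : (0:ℝ) ≤ -τ := by linarith
  calc 2 * (-τ) * kk a τ
      = c * ((-τ) * Real.exp (-((τ - a) ^ 2 / 2))) := by
        rw [kk, e1, hc]; ring
    _ ≤ c * ((-τ) * Real.exp (-(τ ^ 2 / 2))) := by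
        apply mul_le_mul_of_nonneg_left _ hcpos.le
        exact mul_le_mul_of_nonneg_left mono hτn
    _ ≤ c * Real.exp (-(1/2 : ℝ)) := mul_le_mul_of_nonneg_left key hcpos.le
    _ < 1 := hnum

/-- The expected class-controlled feature `F(a, τ)` of a sampled neighbor of a node with
class-controlled feature `a` in the asymptotic CSBM-X model with A-X dependence strength
`τ`:
`F(a,τ) = τ (erfc((τ-a)/√2) - e^{2τa} erfc((τ+a)/√2)) / (erfc((τ-a)/√2) + e^{2τa} erfc((τ+a)/√2))`. -/
noncomputable def F (a τ : ℝ) : ℝ :=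
  τ * (erfc ((τ - a) / Real.sqrt 2) -
        Real.exp (2 * τ * a) * erfc ((τ + a) / Real.sqrt 2)) /
    (erfc ((τ - a) / Real.sqrt 2) +
      Real.exp (2 * τ * a) * erfc ((τ + a) / Real.sqrt 2))

/-- key step of Theorem 4.1: for every fixed `a > 0`, the map
`τ ↦ F(a, τ)` is strictly increasing on `(-∞, 0)`, i.e. `F(a, τ)` decreases as `τ`
decreases from `0` toward `-∞`. -/
theorem expected_neighbor_feature_strictMono (a : ℝ) (ha : 0 < a) :
    StrictMonoOn (fun τ => F a τ) (Set.Iio (0 : ℝ)) := by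
  have key : ∀ τ : ℝ, τ < 0 → ∃ d : ℝ, HasDerivAt (fun τ => F a τ) d τ ∧ 0 < d := by
    intro τ hτ
    have hP := hasDerivAt_P a τ
    have hQ := hasDerivAt_Q a τ
    set p := erfc ((τ - a) / Real.sqrt 2) with hp
    set q := Real.exp (2 * τ * a) * erfc ((τ + a) / Real.sqrt 2) with hq
    set k := kk a τ with hk
    have hN : HasDerivAt (fun τ : ℝ => erfc ((τ - a) / Real.sqrt 2)
        - Real.exp (2 * τ * a) * erfc ((τ + a) / Real.sqrt 2))
        (-k - (2 * a * q - k)) τ := hP.sub hQ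
    have hD : HasDerivAt (fun τ : ℝ => erfc ((τ - a) / Real.sqrt 2)
        + Real.exp (2 * τ * a) * erfc ((τ + a) / Real.sqrt 2))
        (-k + (2 * a * q - k)) τ := hP.add hQ
    have hnum : HasDerivAt (fun τ : ℝ => τ * (erfc ((τ - a) / Real.sqrt 2)
        - Real.exp (2 * τ * a) * erfc ((τ + a) / Real.sqrt 2)))
        (1 * (p - q) + τ * (-k - (2 * a * q - k))) τ := (hasDerivAt_id τ).mul hN
    have hppos : 0 < p := erfc_pos _
    have hqpos : 0 < q := mul_pos (Real.exp_pos _) (erfc_pos _)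
    have hDpos : 0 < p + q := by linarith
    have hF : HasDerivAt (fun τ : ℝ => F a τ)
        (((1 * (p - q) + τ * (-k - (2 * a * q - k))) * (p + q)
          - (τ * (p - q)) * (-k + (2 * a * q - k))) / (p + q) ^ 2) τ := by
      have h := hnum.div hD (ne_of_gt hDpos)
      simpa only [F, Pi.div_def] using h
    refine ⟨_, hF, ?_⟩
    have h1p : 1 < p := by
      apply one_lt_erfc
      apply div_neg_of_neg_of_pos (by linarith) (Real.sqrt_pos.2 (by norm_num))
    have hqp : q < p := Q_lt_P a ha hτ.le
    have hks : 2 * (-τ) * k < 1 := k_small a ha hτ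
    have hkpos : 0 < k := kk_pos a τ
    apply div_pos _ (pow_pos hDpos 2)
    have h1 : 0 < p - q := by linarith
    have h2 : 0 < p + q + 2 * τ * k := by nlinarith
    have h3 : 0 < (-τ) * (4 * a * p * q) := by
      apply mul_pos (by linarith)
      positivity
    nlinarith [mul_pos h1 h2, h3]
  have cont : ContinuousOn (fun τ => F a τ) (Set.Iio 0) := by
    intro x hx
    obtain ⟨d, hd, _⟩ := key x hx
    exact hd.differentiableAt.continuousAt.continuousWithinAt
  apply strictMonoOn_of_deriv_pos (convex_Iio 0) cont
  intro x hx
  rw [interior_Iio] at hx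
  obtain ⟨d, hd, hdpos⟩ := key x hx
  rwa [hd.deriv]
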